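/- For any integer ι ≥ 1 and any matrices M_1,…,M_ι ∈ 𝒜_O, with P = M_ιM_{ι−1}⋯M_1 and θ̃ = min{1−v_m·Δt/Δx, 1−w·Δt/Δx}: det(PP^T) ≥ θ̃^{2ιn}, and the smallest eigenvalue of the positive definite matrix PP^T satisfies σ_min(PP^T) > θ̃^{2ιn} / √(4n·(2ι+1)²·2^{n−2}). -/

import Mathlib

open Matrix Filter Finset

noncomputable section

/-- Loewner strict order `A < B`. -/
def loewnerLT {m : Type*} [Fintype m] (A B : Matrix m m ℝ) : Prop := (B - A).PosDef

/-- Loewner order `A ≤ B`. -/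
def loewnerLE {m : Type*} [Fintype m] (A B : Matrix m m ℝ) : Prop := (B - A).PosSemidef

/-- smallest (real) eigenvalue of a matrix -/
def lamMin {N : ℕ} (M : Matrix (Fin N) (Fin N) ℝ) : ℝ :=
  sInf {t : ℝ | ∃ v : Fin N → ℝ, v ≠ 0 ∧ M.mulVec v = t • v}

/-- largest (real) eigenvalue of a matrix -/
def lamMax {N : ℕ} (M : Matrix (Fin N) (Fin N) ℝ) : ℝ :=
  sSup {t : ℝ | ∃ v : Fin N → ℝ, v ≠ 0 ∧ M.mulVec v = t • v}

/-- spectral norm (ℓ²-operator norm) of a square matrix -/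
def matSpectralNorm {N : ℕ} (M : Matrix (Fin N) (Fin N) ℝ) : ℝ :=
  ‖Matrix.toEuclideanCLM (𝕜 := ℝ) M‖

/-- largest singular value -/
def sigmaMax {N : ℕ} (M : Matrix (Fin N) (Fin N) ℝ) : ℝ := matSpectralNorm M

/-- maximum absolute row-sum matrix norm -/
def rowSumNorm {m n : ℕ} (M : Matrix (Fin m) (Fin n) ℝ) : ℝ :=
  ⨆ i : Fin m, ∑ j, |M i j|

/-- Euclidean norm of a vector -/
def euclNorm {N : ℕ} (v : Fin N → ℝ) : ℝ := Real.sqrt (∑ j, (v j) ^ 2)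

/-- the free-flow mode matrix A_FF -/
def matAFF (N : ℕ) (θv : ℝ) : Matrix (Fin N) (Fin N) ℝ :=
  Matrix.of fun i j =>
    if (i : ℕ) = 0 ∧ (j : ℕ) = 0 then 1
    else if i = j then 1 - θv
    else if (i : ℕ) = (j : ℕ) + 1 then θv
    else 0

/-- the congestion mode matrix A_CC -/
def matACC (N : ℕ) (θw : ℝ) : Matrix (Fin N) (Fin N) ℝ :=
  Matrix.of fun i j =>
    if (i : ℕ) = N - 1 ∧ (j : ℕ) = N - 1 then 1
    else if i = j then 1 - θw
    else if (j : ℕ) = (i : ℕ) + 1 then θw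
    else 0

/-- the congestion–freeflow mode matrix A_CF^s = diag(Δ_s, Θ_{N−s}) -/
def matACF (N s : ℕ) (θv θw : ℝ) : Matrix (Fin N) (Fin N) ℝ :=
  Matrix.of fun i j =>
    if (i : ℕ) < s ∧ (j : ℕ) < s then
      (if i = j then 1 - θw else if (j : ℕ) = (i : ℕ) + 1 then θw else 0)
    else if s ≤ (i : ℕ) ∧ s ≤ (j : ℕ) then
      (if i = j then 1 - θv else if (i : ℕ) = (j : ℕ) + 1 then θv else 0)
    else 0

/-- set of observable-mode state transition matrices 𝒜_O -/
def setAO (N : ℕ) (θv θw : ℝ) : Set (Matrix (Fin N) (Fin N) ℝ) :=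
  {matAFF N θv, matACC N θw} ∪ {M | ∃ s, 1 ≤ s ∧ s ≤ N - 1 ∧ M = matACF N s θv θw}

/-- boundary output matrix H_b, rows e_1ᵀ and e_nᵀ -/
def matHb (N : ℕ) : Matrix (Fin 2) (Fin N) ℝ :=
  Matrix.of fun i j =>
    if (i : ℕ) = 0 ∧ (j : ℕ) = 0 then 1
    else if (i : ℕ) = 1 ∧ (j : ℕ) = N - 1 then 1
    else 0

/-- standing assumption on output matrices: pairwise distinct standard basis rows,
including e_1ᵀ and e_nᵀ -/
def standingH {mk N : ℕ} (H : Matrix (Fin mk) (Fin N) ℝ) : Prop :=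
  (∀ p : Fin mk, ∃ l : Fin N, H p = fun j => if j = l then 1 else 0) ∧
  (∀ p q : Fin mk, H p = H q → p = q) ∧
  (∃ p : Fin mk, H p = fun j : Fin N => if (j : ℕ) = 0 then 1 else 0) ∧
  (∃ p : Fin mk, H p = fun j : Fin N => if (j : ℕ) = N - 1 then 1 else 0)

/-- ascending product of inverses  M_lo⁻¹ · M_{lo+1}⁻¹ ⋯ M_hi⁻¹ -/
def prodInvAsc {N : ℕ} (M : ℕ → Matrix (Fin N) (Fin N) ℝ) (lo hi : ℕ) :
    Matrix (Fin N) (Fin N) ℝ :=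
  ((List.range (hi + 1 - lo)).map (fun t => (M (lo + t))⁻¹)).prod

/-- descending product  M_hi · M_{hi−1} ⋯ M_lo -/
def prodDesc {N : ℕ} (M : ℕ → Matrix (Fin N) (Fin N) ℝ) (hi lo : ℕ) :
    Matrix (Fin N) (Fin N) ℝ :=
  ((List.range (hi + 1 - lo)).map (fun t => M (hi - t))).prod

/-- a_𝓘 -/
def aI (N : ℕ) (θv θw r2 : ℝ) : ℝ :=
  r2⁻¹ * sInf {t : ℝ | ∃ M : ℕ → Matrix (Fin N) (Fin N) ℝ,
    (∀ ι, 1 ≤ ι → ι ≤ max 1 (N - 2) → M ι ∈ setAO N θv θw) ∧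
    t = lamMin ((matHb N)ᵀ * matHb N +
      ∑ ι ∈ Finset.Icc 1 (max 1 (N - 2)),
        (prodInvAsc M ι (max 1 (N - 2)))ᵀ * (matHb N)ᵀ * matHb N *
          prodInvAsc M ι (max 1 (N - 2)))}

/-- b_𝓘 -/
def bI (N : ℕ) (θv θw r1 : ℝ) : ℝ :=
  r1⁻¹ * sSup {t : ℝ | ∃ M : ℕ → Matrix (Fin N) (Fin N) ℝ,
    (∀ ι, 1 ≤ ι → ι ≤ max 1 (N - 2) → M ι ∈ setAO N θv θw) ∧
    t = lamMax (1 +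
      ∑ ι ∈ Finset.Icc 1 (max 1 (N - 2)),
        (prodInvAsc M ι (max 1 (N - 2)))ᵀ * prodInvAsc M ι (max 1 (N - 2)))}

/-- a_𝓒 -/
def aC (N : ℕ) (θv θw q1 : ℝ) : ℝ :=
  q1 * sInf {t : ℝ | ∃ M : ℕ → Matrix (Fin N) (Fin N) ℝ,
    (∀ ι, 1 ≤ ι → ι ≤ max 1 (N - 2) → M ι ∈ setAO N θv θw) ∧
    t = lamMin (1 +
      ∑ ι ∈ Finset.Icc 1 (max 1 (N - 2) - 1),
        prodDesc M (max 1 (N - 2) - 1) ι * (prodDesc M (max 1 (N - 2) - 1) ι)ᵀ)}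

/-- b_𝓒 -/
def bC (N : ℕ) (θv θw q2 : ℝ) : ℝ :=
  q2 * sSup {t : ℝ | ∃ M : ℕ → Matrix (Fin N) (Fin N) ℝ,
    (∀ ι, 1 ≤ ι → ι ≤ max 1 (N - 2) → M ι ∈ setAO N θv θw) ∧
    t = lamMax (1 +
      ∑ ι ∈ Finset.Icc 1 (max 1 (N - 2) - 1),
        prodDesc M (max 1 (N - 2) - 1) ι * (prodDesc M (max 1 (N - 2) - 1) ι)ᵀ)}

/-- constant c₁ -/
def cLow (N : ℕ) (θv θw q1 q2 r1 r2 : ℝ) : ℝ :=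
  min (aI N θv θw r2) (aC N θv θw q1) /
    (1 + min (aI N θv θw r2) (aC N θv θw q1) * max (bI N θv θw r1) (bC N θv θw q2))

/-- constant c₂ -/
def cHigh (N : ℕ) (θv θw q1 q2 r1 r2 : ℝ) : ℝ :=
  (1 + min (aI N θv θw r2) (aC N θv θw q1) * max (bI N θv θw r1) (bC N θv θw q2)) /
    min (aI N θv θw r2) (aC N θv θw q1)


/-- the product `M_b · M_{b−1} ⋯ M_1` (empty product = identity) -/
def prodSeq {N : ℕ} (M : ℕ → Matrix (Fin N) (Fin N) ℝ) : ℕ → Matrix (Fin N) (Fin N) ℝ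
  | 0 => 1
  | b + 1 => M (b + 1) * prodSeq M b

/-- the stacked observability matrix with blocks `H_b, H_b M₁, H_b M₂M₁, …,
H_b M_T⋯M₁` -/
def stackObs (n T : ℕ) (M : ℕ → Matrix (Fin n) (Fin n) ℝ) :
    Matrix (Fin (2 * (T + 1))) (Fin n) ℝ :=
  Matrix.of fun r c =>
    (matHb n * prodSeq M ((r : ℕ) / 2)) ⟨(r : ℕ) % 2, by omega⟩ c

section helperlemmas

variable {n : ℕ} {θv θw : ℝ}

lemma matAFF_nonneg (hv0 : 0 < θv) (hv1 : θv < 1) (i j : Fin n) :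
    0 ≤ matAFF n θv i j := by
  simp only [matAFF, Matrix.of_apply]
  split_ifs <;> linarith

lemma matACC_nonneg (hw0 : 0 < θw) (hw1 : θw < 1) (i j : Fin n) :
    0 ≤ matACC n θw i j := by
  simp only [matACC, Matrix.of_apply]
  split_ifs <;> linarith

lemma matACF_nonneg {s : ℕ} (hv0 : 0 < θv) (hv1 : θv < 1) (hw0 : 0 < θw) (hw1 : θw < 1)
    (i j : Fin n) : 0 ≤ matACF n s θv θw i j := by
  simp only [matACF, Matrix.of_apply]
  split_ifs <;> linarith


lemma sum_le_pair {n : ℕ} (f : Fin n → ℝ) (k l : Fin n) (c : ℝ)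
    (h0 : ∀ j, j ≠ k → j ≠ l → f j = 0)
    (hc : f k + (if l = k then 0 else f l) ≤ c) : ∑ j, f j ≤ c := by
  classical
  have hsub : ∑ j, f j = ∑ j ∈ ({k, l} : Finset (Fin n)), f j := by
    refine (Finset.sum_subset (Finset.subset_univ _) ?_).symm
    intro j _ hj
    simp only [Finset.mem_insert, Finset.mem_singleton, not_or] at hj
    exact h0 j hj.1 hj.2
  rw [hsub]
  by_cases hkl : l = k
  · subst hkl
    simpa using hc
  · rw [Finset.sum_pair (fun h => hkl h.symm)]
    simpa [hkl] using hc

lemma matAFF_rowsum (hv0 : 0 < θv) (hv1 : θv < 1) (i : Fin n) :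
    ∑ j, matAFF n θv i j ≤ 1 := by
  have hin := i.isLt
  refine sum_le_pair _ i ⟨(i:ℕ) - 1, by omega⟩ 1 ?_ ?_
  · intro j hj1 hj2
    have hj1' : (j:ℕ) ≠ (i:ℕ) := fun h => hj1 (Fin.ext h)
    have hj2' : (j:ℕ) ≠ (i:ℕ) - 1 := fun h => hj2 (Fin.ext h)
    simp only [matAFF, Matrix.of_apply]
    split_ifs with h1 h2 h3
    · omega
    · exact absurd (Fin.ext_iff.mp h2) fun h => hj1' h.symm
    · omega
    · rfl
  · by_cases hi : (i:ℕ) = 0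
    · have hl : (⟨(i:ℕ) - 1, by omega⟩ : Fin n) = i := Fin.ext (by simp [hi])
      rw [if_pos hl]
      simp only [matAFF, Matrix.of_apply, hi]
      norm_num
    · have hl : (⟨(i:ℕ) - 1, by omega⟩ : Fin n) ≠ i := by
        intro h
        have := Fin.ext_iff.mp h
        simp at this
        omega
      rw [if_neg hl]
      have e1 : matAFF n θv i i = 1 - θv := by
        simp only [matAFF, Matrix.of_apply]
        split_ifs with h1 h2 <;> first | omega | rfl | simp_all
      have e2 : matAFF n θv i ⟨(i:ℕ) - 1, by omega⟩ = θv := by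
        simp only [matAFF, Matrix.of_apply]
        split_ifs with h1 h2 h3
        · omega
        · exact absurd (Fin.ext_iff.mp h2) (by simp; omega)
        · rfl
        · exact absurd (show (i:ℕ) = (i:ℕ) - 1 + 1 by omega) h3
      rw [e1, e2]; linarith

lemma matACC_rowsum (hw0 : 0 < θw) (hw1 : θw < 1) (i : Fin n) :
    ∑ j, matACC n θw i j ≤ 1 := by
  have hin := i.isLt
  refine sum_le_pair _ i ⟨min ((i:ℕ) + 1) (n - 1), by omega⟩ 1 ?_ ?_
  · intro j hj1 hj2
    have hj1' : (j:ℕ) ≠ (i:ℕ) := fun h => hj1 (Fin.ext h)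
    have hj2' : (j:ℕ) ≠ min ((i:ℕ) + 1) (n - 1) := fun h => hj2 (Fin.ext h)
    have hjn := j.isLt
    simp only [matACC, Matrix.of_apply]
    split_ifs with h1 h2 h3
    · omega
    · exact absurd (Fin.ext_iff.mp h2) fun h => hj1' h.symm
    · omega
    · rfl
  · by_cases hi : (i:ℕ) = n - 1
    · have hl : (⟨min ((i:ℕ) + 1) (n - 1), by omega⟩ : Fin n) = i := Fin.ext (by simp; omega)
      rw [if_pos hl]
      have e1 : matACC n θw i i = 1 := by
        simp only [matACC, Matrix.of_apply]
        rw [if_pos ⟨hi, hi⟩]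
      rw [e1]; norm_num
    · have hl : (⟨min ((i:ℕ) + 1) (n - 1), by omega⟩ : Fin n) ≠ i := by
        intro h
        have := Fin.ext_iff.mp h
        simp at this
        omega
      rw [if_neg hl]
      have e1 : matACC n θw i i = 1 - θw := by
        simp only [matACC, Matrix.of_apply]
        split_ifs with h1 h2 <;> first | omega | rfl | simp_all
      have e2 : matACC n θw i ⟨min ((i:ℕ) + 1) (n - 1), by omega⟩ = θw := by
        simp only [matACC, Matrix.of_apply]
        rw [if_neg (fun h => hi h.1), if_neg (fun h => hl h.symm),
          if_pos (show ((⟨min ((i:ℕ) + 1) (n - 1), by omega⟩ : Fin n) : ℕ) = (i:ℕ) + 1 by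
            simp; omega)]
      rw [e1, e2]; linarith

lemma matACF_entry_zero {s : ℕ} (i j : Fin n) (hd : (j:ℕ) ≠ (i:ℕ))
    (h1 : ¬((i:ℕ) < s ∧ (j:ℕ) < s ∧ (j:ℕ) = (i:ℕ) + 1))
    (h2 : ¬(s ≤ (i:ℕ) ∧ s ≤ (j:ℕ) ∧ (i:ℕ) = (j:ℕ) + 1)) :
    matACF n s θv θw i j = 0 := by
  simp only [matACF, Matrix.of_apply]
  split_ifs with c1 c2 c3 c4 c5 c6
  · exact absurd (Fin.ext_iff.mp c2) (by omega)
  · omega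
  · rfl
  · exact absurd (Fin.ext_iff.mp c5) (by omega)
  · omega
  · rfl
  · rfl

lemma matACF_diag {s : ℕ} (i : Fin n) :
    matACF n s θv θw i i = if (i:ℕ) < s then 1 - θw else 1 - θv := by
  by_cases hi : (i:ℕ) < s
  · simp [matACF, hi]
  · simp [matACF, hi, Nat.le_of_not_lt hi]

lemma matACF_rowsum {s : ℕ} (hv0 : 0 < θv) (hv1 : θv < 1) (hw0 : 0 < θw) (hw1 : θw < 1)
    (hs1 : 1 ≤ s) (hs2 : s ≤ n - 1) (hn : 2 ≤ n) (i : Fin n) :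
    ∑ j, matACF n s θv θw i j ≤ 1 := by
  have hin := i.isLt
  by_cases ha : (i:ℕ) + 1 < s
  · refine sum_le_pair _ i ⟨(i:ℕ) + 1, by omega⟩ 1 ?_ ?_
    · intro j hj1 hj2
      have hj1' : (j:ℕ) ≠ (i:ℕ) := fun h => hj1 (Fin.ext h)
      have hj2' : (j:ℕ) ≠ (i:ℕ) + 1 := fun h => hj2 (Fin.ext h)
      exact matACF_entry_zero i j hj1' (by omega) (by omega)
    · have hl : (⟨(i:ℕ) + 1, by omega⟩ : Fin n) ≠ i := by
        simp [Fin.ext_iff]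
      rw [if_neg hl, matACF_diag, if_pos (by omega)]
      have e2 : matACF n s θv θw i ⟨(i:ℕ) + 1, by omega⟩ = θw := by
        simp only [matACF, Matrix.of_apply]
        have hc1 : (i:ℕ) < s ∧ ((⟨(i:ℕ) + 1, by omega⟩ : Fin n) : ℕ) < s :=
          ⟨by omega, by show (i:ℕ) + 1 < s; omega⟩
        have hc2 : i ≠ (⟨(i:ℕ) + 1, by omega⟩ : Fin n) := by simp [Fin.ext_iff]
        rw [if_pos hc1, if_neg hc2]
        simp
      rw [e2]; linarith
  · by_cases hb : s + 1 ≤ (i:ℕ)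
    · refine sum_le_pair _ i ⟨(i:ℕ) - 1, by omega⟩ 1 ?_ ?_
      · intro j hj1 hj2
        have hj1' : (j:ℕ) ≠ (i:ℕ) := fun h => hj1 (Fin.ext h)
        have hj2' : (j:ℕ) ≠ (i:ℕ) - 1 := fun h => hj2 (Fin.ext h)
        exact matACF_entry_zero i j hj1' (by omega) (by omega)
      · have hl : (⟨(i:ℕ) - 1, by omega⟩ : Fin n) ≠ i := by
          simp [Fin.ext_iff]; omega
        rw [if_neg hl, matACF_diag, if_neg (by omega)]
        have e2 : matACF n s θv θw i ⟨(i:ℕ) - 1, by omega⟩ = θv := by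
          simp only [matACF, Matrix.of_apply]
          have hc0 : ¬((i:ℕ) < s ∧ ((⟨(i:ℕ) - 1, by omega⟩ : Fin n) : ℕ) < s) := by
            intro h
            exact absurd h.1 (by omega)
          have hc1 : s ≤ (i:ℕ) ∧ s ≤ ((⟨(i:ℕ) - 1, by omega⟩ : Fin n) : ℕ) :=
            ⟨by omega, by show s ≤ (i:ℕ) - 1; omega⟩
          have hc2 : i ≠ (⟨(i:ℕ) - 1, by omega⟩ : Fin n) := by simp [Fin.ext_iff]; omega
          rw [if_neg hc0, if_pos hc1, if_neg hc2]
          simp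
          omega
        rw [e2]; linarith
    · refine sum_le_pair _ i i 1 ?_ ?_
      · intro j hj1 _
        have hj1' : (j:ℕ) ≠ (i:ℕ) := fun h => hj1 (Fin.ext h)
        exact matACF_entry_zero i j hj1' (by omega) (by omega)
      · rw [if_pos rfl, matACF_diag]
        split_ifs <;> linarith

lemma theta_nonneg (hv1 : θv < 1) (hw1 : θw < 1) : 0 ≤ min (1 - θv) (1 - θw) := by
  simp only [le_min_iff]; constructor <;> linarith

lemma det_matAFF_ge (hv0 : 0 < θv) (hv1 : θv < 1) (hw0 : 0 < θw) (hw1 : θw < 1) :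
    min (1 - θv) (1 - θw) ^ n ≤ (matAFF n θv).det := by
  have htri : (matAFF n θv).BlockTriangular OrderDual.toDual := by
    intro i j hij
    have hij' : (i:ℕ) < (j:ℕ) := hij
    simp only [matAFF, Matrix.of_apply]
    split_ifs with h1 h2 h3 <;> first | rfl | omega | (exact absurd (Fin.ext_iff.mp h2) (by omega))
  rw [Matrix.det_of_lowerTriangular _ htri]
  calc min (1 - θv) (1 - θw) ^ n = ∏ _i : Fin n, min (1 - θv) (1 - θw) := by
        rw [Finset.prod_const, Finset.card_univ, Fintype.card_fin]
    _ ≤ ∏ i, matAFF n θv i i := by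
        refine Finset.prod_le_prod (fun _ _ => theta_nonneg hv1 hw1) fun i _ => ?_
        simp only [matAFF, Matrix.of_apply]
        split_ifs <;>
          first
          | exact min_le_left _ _
          | exact min_le_right _ _
          | exact le_trans (min_le_left _ _) (by linarith)

lemma det_matACC_ge (hv0 : 0 < θv) (hv1 : θv < 1) (hw0 : 0 < θw) (hw1 : θw < 1) :
    min (1 - θv) (1 - θw) ^ n ≤ (matACC n θw).det := by
  have htri : (matACC n θw).BlockTriangular id := by
    intro i j hij
    have hij' : (j:ℕ) < (i:ℕ) := hij
    simp only [matACC, Matrix.of_apply]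
    split_ifs with h1 h2 h3 <;> first | rfl | omega | (exact absurd (Fin.ext_iff.mp h2) (by omega))
  rw [Matrix.det_of_upperTriangular htri]
  calc min (1 - θv) (1 - θw) ^ n = ∏ _i : Fin n, min (1 - θv) (1 - θw) := by
        rw [Finset.prod_const, Finset.card_univ, Fintype.card_fin]
    _ ≤ ∏ i, matACC n θw i i := by
        refine Finset.prod_le_prod (fun _ _ => theta_nonneg hv1 hw1) fun i _ => ?_
        simp only [matACC, Matrix.of_apply]
        split_ifs <;>
          first
          | exact min_le_left _ _
          | exact min_le_right _ _
          | exact le_trans (min_le_left _ _) (by linarith)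

lemma det_matACF_ge {s : ℕ} (hv0 : 0 < θv) (hv1 : θv < 1) (hw0 : 0 < θw) (hw1 : θw < 1)
    (hs1 : 1 ≤ s) (hs2 : s ≤ n - 1) (hn : 2 ≤ n) :
    min (1 - θv) (1 - θw) ^ n ≤ (matACF n s θv θw).det := by
  have hπb : ∀ i : Fin n, (if (i:ℕ) < s then (i:ℕ) else n - 1 + s - (i:ℕ)) < n := by
    intro i; have := i.isLt; split_ifs <;> omega
  set π : Fin n → Fin n := fun i => ⟨if (i:ℕ) < s then (i:ℕ) else n - 1 + s - (i:ℕ), hπb i⟩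
    with hπ
  have hπval : ∀ i : Fin n, (π i : ℕ) = if (i:ℕ) < s then (i:ℕ) else n - 1 + s - (i:ℕ) :=
    fun i => rfl
  have hinv : Function.Involutive π := by
    intro i
    apply Fin.ext
    rw [hπval, hπval]
    have := i.isLt
    split_ifs <;> omega
  have hdet : ((matACF n s θv θw).submatrix π π).det = (matACF n s θv θw).det := by
    exact Matrix.det_submatrix_equiv_self hinv.toPerm _
  have htri : ((matACF n s θv θw).submatrix π π).BlockTriangular id := by
    intro i j hij
    have hij' : (j:ℕ) < (i:ℕ) := hij
    have hi := i.isLt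
    have hj := j.isLt
    simp only [Matrix.submatrix_apply]
    have hpi := hπval i
    have hpj := hπval j
    refine matACF_entry_zero (π i) (π j) ?_ ?_ ?_ <;> rw [hpi, hpj] <;> split_ifs <;> omega
  rw [← hdet, Matrix.det_of_upperTriangular htri]
  calc min (1 - θv) (1 - θw) ^ n = ∏ _i : Fin n, min (1 - θv) (1 - θw) := by
        rw [Finset.prod_const, Finset.card_univ, Fintype.card_fin]
    _ ≤ ∏ i, (matACF n s θv θw).submatrix π π i i := by
        refine Finset.prod_le_prod (fun _ _ => theta_nonneg hv1 hw1) fun i _ => ?_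
        simp only [Matrix.submatrix_apply]
        rw [matACF_diag]
        split_ifs <;>
          first
          | exact min_le_left _ _
          | exact min_le_right _ _
          | exact le_trans (min_le_left _ _) (by linarith)


lemma nataux (n : ℕ) : 3*n^2 + 3*n + 1 ≤ 9 * 2^n := by
  induction n with
  | zero => norm_num
  | succ m ihm =>
    have h2m : m + 1 ≤ 2^m := by have : m < 2^m := Nat.lt_two_pow_self; omega
    have h1 : 3*(m+1)^2 + 3*(m+1) + 1 = (3*m^2+3*m+1) + (6*m+6) := by ring
    have h3 : 9*2^(m+1) = 9*2^m + 9*2^m := by ring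
    omega

lemma natcube (n : ℕ) : n^3 < 9 * 2^n := by
  induction n with
  | zero => norm_num
  | succ n ih =>
    have haux := nataux n
    have h1 : (n+1)^3 = n^3 + (3*n^2 + 3*n + 1) := by ring
    have h3 : 9*2^(n+1) = 9*2^n + 9*2^n := by ring
    omega

lemma abs_det_le_prod_rowsum {n : ℕ} (N : Matrix (Fin n) (Fin n) ℝ)
    (h0 : ∀ i j, 0 ≤ N i j) : |N.det| ≤ ∏ i, ∑ j, N i j := by
  rw [← Matrix.det_transpose, Matrix.det_apply]
  have key : ∀ σ : Equiv.Perm (Fin n), |Equiv.Perm.sign σ • ∏ i, Nᵀ (σ i) i|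
      = ∏ i, N i (σ i) := by
    intro σ
    have hp : (0:ℝ) ≤ ∏ i, Nᵀ (σ i) i := Finset.prod_nonneg fun i _ => h0 _ _
    have hp' : (0:ℝ) ≤ ∏ i, N i (σ i) := Finset.prod_nonneg fun i _ => h0 _ _
    rcases Int.units_eq_one_or σ.sign with h | h <;>
      simp [h, abs_of_nonneg, hp', Matrix.transpose_apply]
  calc |∑ σ : Equiv.Perm (Fin n), Equiv.Perm.sign σ • ∏ i, Nᵀ (σ i) i|
      ≤ ∑ σ : Equiv.Perm (Fin n), |Equiv.Perm.sign σ • ∏ i, Nᵀ (σ i) i| :=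
        Finset.abs_sum_le_sum_abs _ _
    _ = ∑ σ : Equiv.Perm (Fin n), ∏ i, N i (σ i) := by
        exact Finset.sum_congr rfl fun σ _ => key σ
    _ = ∑ g ∈ Finset.univ.image (fun σ : Equiv.Perm (Fin n) => ⇑σ), ∏ i, N i (g i) := by
        rw [Finset.sum_image]
        intro a _ b _ h
        exact Equiv.coe_fn_injective h
    _ ≤ ∑ g : Fin n → Fin n, ∏ i, N i (g i) := by
        apply Finset.sum_le_sum_of_subset_of_nonneg (Finset.subset_univ _)
        intro g _ _
        exact Finset.prod_nonneg fun i _ => h0 _ _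
    _ = ∏ i, ∑ j, N i j := by
        rw [Finset.prod_univ_sum (fun _ => Finset.univ) (fun i j => N i j)]
        rw [Fintype.piFinset_univ]




lemma AO_props (hn : 2 ≤ n) (hv0 : 0 < θv) (hv1 : θv < 1) (hw0 : 0 < θw) (hw1 : θw < 1)
    {A : Matrix (Fin n) (Fin n) ℝ} (hA : A ∈ setAO n θv θw) :
    (∀ i j, 0 ≤ A i j) ∧ (∀ i, ∑ j, A i j ≤ 1) ∧
      min (1 - θv) (1 - θw) ^ n ≤ A.det := by
  rcases hA with h | ⟨s, hs1, hs2, rfl⟩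
  · rcases h with h | h <;> subst h
    · exact ⟨matAFF_nonneg hv0 hv1, matAFF_rowsum hv0 hv1, det_matAFF_ge hv0 hv1 hw0 hw1⟩
    · exact ⟨matACC_nonneg hw0 hw1, matACC_rowsum hw0 hw1, det_matACC_ge hv0 hv1 hw0 hw1⟩
  · exact ⟨matACF_nonneg hv0 hv1 hw0 hw1, matACF_rowsum hv0 hv1 hw0 hw1 hs1 hs2 hn,
      det_matACF_ge hv0 hv1 hw0 hw1 hs1 hs2 hn⟩

lemma prodSeq_props (hn : 2 ≤ n) (hv0 : 0 < θv) (hv1 : θv < 1) (hw0 : 0 < θw) (hw1 : θw < 1)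
    (M : ℕ → Matrix (Fin n) (Fin n) ℝ) (ι : ℕ)
    (hM : ∀ κ, 1 ≤ κ → κ ≤ ι → M κ ∈ setAO n θv θw) :
    ∀ b, b ≤ ι → (∀ i j, 0 ≤ prodSeq M b i j) ∧ (∀ i, ∑ j, prodSeq M b i j ≤ 1) ∧
      min (1 - θv) (1 - θw) ^ (b * n) ≤ (prodSeq M b).det := by
  intro b
  induction b with
  | zero =>
    intro _
    refine ⟨?_, ?_, ?_⟩
    · intro i j
      show (0:ℝ) ≤ (1 : Matrix (Fin n) (Fin n) ℝ) i j
      rw [Matrix.one_apply]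
      split_ifs <;> norm_num
    · intro i
      show ∑ j, (1 : Matrix (Fin n) (Fin n) ℝ) i j ≤ 1
      simp [Matrix.one_apply]
    · show min (1 - θv) (1 - θw) ^ (0 * n) ≤ (1 : Matrix (Fin n) (Fin n) ℝ).det
      simp
  | succ b ih =>
    intro hb
    obtain ⟨h0, h1, hd⟩ := ih (by omega)
    obtain ⟨g0, g1, gd⟩ := AO_props hn hv0 hv1 hw0 hw1 (hM (b+1) (by omega) hb)
    have hθn : (0:ℝ) ≤ min (1 - θv) (1 - θw) ^ n := pow_nonneg (theta_nonneg hv1 hw1) n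
    have hθbn : (0:ℝ) ≤ min (1 - θv) (1 - θw) ^ (b * n) :=
      pow_nonneg (theta_nonneg hv1 hw1) _
    refine ⟨?_, ?_, ?_⟩
    · intro i j
      show 0 ≤ (M (b+1) * prodSeq M b) i j
      rw [Matrix.mul_apply]
      exact Finset.sum_nonneg fun k _ => mul_nonneg (g0 i k) (h0 k j)
    · intro i
      show ∑ j, (M (b+1) * prodSeq M b) i j ≤ 1
      simp only [Matrix.mul_apply]
      rw [Finset.sum_comm]
      calc ∑ k, ∑ j, M (b+1) i k * prodSeq M b k j
          = ∑ k, M (b+1) i k * ∑ j, prodSeq M b k j := by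
            exact Finset.sum_congr rfl fun k _ => (Finset.mul_sum _ _ _).symm
        _ ≤ ∑ k, M (b+1) i k * 1 := by
            refine Finset.sum_le_sum fun k _ => ?_
            exact mul_le_mul_of_nonneg_left (h1 k) (g0 i k)
        _ = ∑ k, M (b+1) i k := by simp
        _ ≤ 1 := g1 i
    · show min (1 - θv) (1 - θw) ^ ((b+1) * n) ≤ (M (b+1) * prodSeq M b).det
      rw [Matrix.det_mul]
      have : (b+1) * n = n + b * n := by ring
      rw [this, pow_add]
      exact mul_le_mul gd hd hθbn (le_trans hθn gd)

lemma adj_abs_le {P : Matrix (Fin n) (Fin n) ℝ} (h0 : ∀ i j, 0 ≤ P i j)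
    (h1 : ∀ i, ∑ j, P i j ≤ 1) (i j : Fin n) : |P.adjugate i j| ≤ 1 := by
  rw [Matrix.adjugate_apply]
  set B := P.updateRow j (Pi.single i 1) with hB
  have hB0 : ∀ a b, 0 ≤ B a b := by
    intro a b
    rw [hB, Matrix.updateRow_apply]
    split_ifs with h
    · rw [Pi.single_apply]; split_ifs <;> norm_num
    · exact h0 a b
  have hrow : ∀ a, ∑ b, B a b ≤ 1 := by
    intro a
    rw [hB]
    by_cases h : a = j
    · subst h
      simp [Matrix.updateRow_self, Pi.single_apply]
    · simp only [Matrix.updateRow_apply, if_neg h]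
      exact h1 a
  calc |B.det| ≤ ∏ a, ∑ b, B a b := abs_det_le_prod_rowsum B hB0
    _ ≤ 1 := Finset.prod_le_one (fun a _ => Finset.sum_nonneg fun b _ => hB0 a b)
        (fun a _ => hrow a)

lemma eig_lower (hn : 2 ≤ n) {P : Matrix (Fin n) (Fin n) ℝ} (hdet : 0 < P.det)
    (hadj : ∀ i j, |P.adjugate i j| ≤ 1) {t : ℝ} {v : Fin n → ℝ} (hv : v ≠ 0)
    (heq : (P * Pᵀ).mulVec v = t • v) : P.det ^ 2 / (n:ℝ) ^ 2 ≤ t := by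
  have hdT : Pᵀ.det = P.det := Matrix.det_transpose P
  have hu : IsUnit Pᵀ.det := by rw [hdT]; exact Ne.isUnit (ne_of_gt hdet)
  set Q := (Pᵀ)⁻¹ with hQ
  set w := Pᵀ.mulVec v with hw
  have hQw : Q.mulVec w = v := by
    rw [hw, Matrix.mulVec_mulVec, Matrix.nonsing_inv_mul _ hu, Matrix.one_mulVec]
  have ht : t * (∑ k, v k ^ 2) = ∑ k, w k ^ 2 := by
    have h2 : v ⬝ᵥ (P * Pᵀ).mulVec v = t * (v ⬝ᵥ v) := by
      rw [heq, dotProduct_smul, smul_eq_mul]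
    have h3 : v ⬝ᵥ (P * Pᵀ).mulVec v = w ⬝ᵥ w := by
      rw [← Matrix.mulVec_mulVec, Matrix.dotProduct_mulVec, hw, Matrix.mulVec_transpose]
    have h4 : v ⬝ᵥ v = ∑ k, v k ^ 2 := by
      simp [dotProduct, pow_two]
    have h5 : w ⬝ᵥ w = ∑ k, w k ^ 2 := by
      simp [dotProduct, pow_two]
    rw [← h4, ← h5, ← h2, h3]
  set Vs := ∑ k, v k ^ 2 with hVs
  set Ws := ∑ k, w k ^ 2 with hWs
  set F := ∑ i, ∑ j, Q i j ^ 2 with hF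
  have hVpos : 0 < Vs := by
    obtain ⟨k, hk⟩ := Function.ne_iff.mp hv
    have h1 : (0:ℝ) < v k ^ 2 :=
      lt_of_le_of_ne (sq_nonneg _) (Ne.symm (pow_ne_zero 2 hk))
    have h2 : v k ^ 2 ≤ Vs :=
      Finset.single_le_sum (fun k _ => sq_nonneg (v k)) (Finset.mem_univ k)
    linarith
  have hWnonneg : 0 ≤ Ws := Finset.sum_nonneg fun k _ => sq_nonneg _
  have hCS : Vs ≤ F * Ws := by
    have hva : ∀ k, v k = ∑ j, Q k j * w j := by
      intro k
      rw [← hQw]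
      simp [Matrix.mulVec, dotProduct]
    calc Vs = ∑ k, (∑ j, Q k j * w j) ^ 2 := by
          rw [hVs]; exact Finset.sum_congr rfl fun k _ => by rw [hva k]
      _ ≤ ∑ k, (∑ j, Q k j ^ 2) * Ws := by
          refine Finset.sum_le_sum fun k _ => ?_
          exact Finset.sum_mul_sq_le_sq_mul_sq Finset.univ _ _
      _ = F * Ws := by rw [hF, Finset.sum_mul]
  have ht0 : 0 ≤ t := by
    by_contra hneg
    push_neg at hneg
    nlinarith
  have hn2pos : (0:ℝ) < (n:ℝ) ^ 2 := by
    have h1 : (0:ℝ) < (n:ℝ) := by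
      have : 0 < n := by omega
      exact_mod_cast this
    positivity
  have hd2pos : (0:ℝ) < P.det ^ 2 := by positivity
  have hFle : F ≤ (n:ℝ) ^ 2 / P.det ^ 2 := by
    have hQij : ∀ i j, Q i j ^ 2 ≤ 1 / P.det ^ 2 := by
      intro i j
      have e1 : Q i j = (P.det)⁻¹ * (P.adjugate j i) := by
        rw [hQ, Matrix.inv_def, hdT]
        have e2 : Pᵀ.adjugate i j = P.adjugate j i := by
          rw [← Matrix.adjugate_transpose, Matrix.transpose_apply]
        simp [Matrix.smul_apply, e2, Ring.inverse_eq_inv', smul_eq_mul]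
      rw [e1]
      have := hadj j i
      have habs : P.adjugate j i ^ 2 ≤ 1 := by nlinarith [abs_nonneg (P.adjugate j i), sq_abs (P.adjugate j i)]
      rw [mul_pow, one_div]
      calc (P.det ⁻¹) ^ 2 * P.adjugate j i ^ 2 ≤ (P.det ⁻¹) ^ 2 * 1 := by
            exact mul_le_mul_of_nonneg_left habs (by positivity)
        _ = (P.det ^ 2)⁻¹ := by rw [mul_one, ← inv_pow]
    calc F ≤ ∑ _i : Fin n, ∑ _j : Fin n, 1 / P.det ^ 2 := by
          exact Finset.sum_le_sum fun i _ => Finset.sum_le_sum fun j _ => hQij i j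
      _ = (n:ℝ) * ((n:ℝ) * (1 / P.det ^ 2)) := by
          simp [Finset.sum_const, Finset.card_univ]
      _ = (n:ℝ) ^ 2 / P.det ^ 2 := by ring
  have h1F : 1 ≤ F * t := by
    have hWt : Ws = t * Vs := ht.symm
    have : Vs ≤ F * t * Vs := by
      calc Vs ≤ F * Ws := hCS
        _ = F * t * Vs := by rw [hWt]; ring
    nlinarith
  have h4 : 1 ≤ ((n:ℝ) ^ 2 / P.det ^ 2) * t :=
    le_trans h1F (mul_le_mul_of_nonneg_right hFle ht0)
  rw [div_le_iff₀ hn2pos]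
  have h5 : P.det ^ 2 * 1 ≤ P.det ^ 2 * (((n:ℝ) ^ 2 / P.det ^ 2) * t) :=
    mul_le_mul_of_nonneg_left h4 (le_of_lt hd2pos)
  have h6 : P.det ^ 2 * (((n:ℝ) ^ 2 / P.det ^ 2) * t) = t * (n:ℝ) ^ 2 := by
    field_simp
  linarith [h5, h6]

end helperlemmas

/-- determinant and smallest-eigenvalue lower bounds for `PPᵀ`,
where `P = M_ι ⋯ M_1` is a product of observable-mode matrices and
`θ̃ = min{1−v_mΔt/Δx, 1−wΔt/Δx}`. -/
theorem stmt16
    (n : ℕ) (hn : 2 ≤ n)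
    (Δt Δx vm w : ℝ) (hΔt : 0 < Δt) (hΔx : 0 < Δx) (hvm : 0 < vm) (hw : 0 < w)
    (hv1 : vm * Δt / Δx < 1) (hw1 : w * Δt / Δx < 1)
    (ι : ℕ) (hι : 1 ≤ ι)
    (M : ℕ → Matrix (Fin n) (Fin n) ℝ)
    (hM : ∀ κ, 1 ≤ κ → κ ≤ ι → M κ ∈ setAO n (vm * Δt / Δx) (w * Δt / Δx)) :
    (prodSeq M ι * (prodSeq M ι)ᵀ).det ≥
      (min (1 - vm * Δt / Δx) (1 - w * Δt / Δx)) ^ (2 * ι * n) ∧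
    lamMin (prodSeq M ι * (prodSeq M ι)ᵀ) >
      (min (1 - vm * Δt / Δx) (1 - w * Δt / Δx)) ^ (2 * ι * n) /
        Real.sqrt (4 * n * ((2 * ι + 1 : ℕ) : ℝ) ^ 2 * 2 ^ (n - 2)) := by
  have hv0 : 0 < vm * Δt / Δx := by positivity
  have hw0 : 0 < w * Δt / Δx := by positivity
  set θm := min (1 - vm * Δt / Δx) (1 - w * Δt / Δx) with hθm
  have hθm0 : 0 < θm := lt_min (by linarith) (by linarith)
  obtain ⟨h0, h1, hd⟩ := prodSeq_props hn hv0 hv1 hw0 hw1 M ι hM ι le_rfl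
  set P := prodSeq M ι with hP
  have hdetpos : 0 < P.det := lt_of_lt_of_le (pow_pos hθm0 _) hd
  have hdet2 : θm ^ (2 * ι * n) ≤ P.det ^ 2 := by
    have h2 : 2 * ι * n = ι * n + ι * n := by ring
    rw [h2, pow_add, pow_two]
    exact mul_le_mul hd hd (pow_nonneg (le_of_lt hθm0) _) (le_of_lt hdetpos)
  have hn2pos : (0:ℝ) < (n:ℝ) ^ 2 := by
    have h1 : (0:ℝ) < (n:ℝ) := by exact_mod_cast (by omega : 0 < n)
    positivity
  constructor
  · rw [ge_iff_le, Matrix.det_mul, Matrix.det_transpose]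
    calc θm ^ (2 * ι * n) ≤ P.det ^ 2 := hdet2
      _ = P.det * P.det := by ring
  · have hlow : ∀ t ∈ {t : ℝ | ∃ v : Fin n → ℝ, v ≠ 0 ∧ (P * Pᵀ).mulVec v = t • v},
        P.det ^ 2 / (n:ℝ) ^ 2 ≤ t := by
      rintro t ⟨v, hv, heq⟩
      exact eig_lower hn hdetpos (adj_abs_le h0 h1) hv heq
    have hH : (P * Pᵀ).IsHermitian := by
      have e : Pᴴ = Pᵀ := Matrix.conjTranspose_eq_transpose_of_trivial P
      rw [← e]
      exact Matrix.isHermitian_mul_conjTranspose_self P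
    have hne : Set.Nonempty {t : ℝ | ∃ v : Fin n → ℝ, v ≠ 0 ∧ (P * Pᵀ).mulVec v = t • v} := by
      refine ⟨hH.eigenvalues ⟨0, by omega⟩, ⇑(hH.eigenvectorBasis ⟨0, by omega⟩), ?_,
        hH.mulVec_eigenvectorBasis ⟨0, by omega⟩⟩
      have hb := hH.eigenvectorBasis.toBasis.ne_zero ⟨0, by omega⟩
      rw [OrthonormalBasis.coe_toBasis] at hb
      intro hzero
      exact hb ((WithLp.ofLp_eq_zero 2).mp hzero)
    have hmin : P.det ^ 2 / (n:ℝ) ^ 2 ≤ lamMin (P * Pᵀ) := le_csInf hne hlow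
    have hcR : ((n:ℝ)) ^ 3 < 9 * 2 ^ n := by exact_mod_cast natcube n
    have hnR : (0:ℝ) < (n:ℝ) := by exact_mod_cast (by omega : 0 < n)
    have h2n : (2:ℝ) ^ n = 2 ^ (n - 2) * 4 := by
      have hh : n - 2 + 2 = n := by omega
      calc (2:ℝ) ^ n = 2 ^ (n - 2 + 2) := by rw [hh]
        _ = 2 ^ (n - 2) * 4 := by rw [pow_add]; norm_num
    have hι' : (9:ℝ) ≤ ((2 * ι + 1 : ℕ) : ℝ) ^ 2 := by
      have h3 : (3:ℝ) ≤ ((2 * ι + 1 : ℕ) : ℝ) := by exact_mod_cast (by omega : 3 ≤ 2 * ι + 1)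
      nlinarith
    have h2p : (0:ℝ) < 2 ^ (n - 2) := by positivity
    have hD4 : (n:ℝ) ^ 4 < 4 * (n:ℝ) * ((2 * ι + 1 : ℕ) : ℝ) ^ 2 * 2 ^ (n - 2) := by
      calc (n:ℝ) ^ 4 = (n:ℝ) * (n:ℝ) ^ 3 := by ring
        _ < (n:ℝ) * (9 * 2 ^ n) := by exact mul_lt_mul_of_pos_left hcR hnR
        _ = 4 * (n:ℝ) * 9 * 2 ^ (n - 2) := by rw [h2n]; ring
        _ ≤ 4 * (n:ℝ) * ((2 * ι + 1 : ℕ) : ℝ) ^ 2 * 2 ^ (n - 2) := by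
            have hmul : 4 * (n:ℝ) * 9 ≤ 4 * (n:ℝ) * ((2 * ι + 1 : ℕ) : ℝ) ^ 2 :=
              mul_le_mul_of_nonneg_left hι' (by positivity)
            exact mul_le_mul_of_nonneg_right hmul (le_of_lt h2p)
    have hsq : (n:ℝ) ^ 2 < Real.sqrt (4 * (n:ℝ) * ((2 * ι + 1 : ℕ) : ℝ) ^ 2 * 2 ^ (n - 2)) := by
      rw [show ((n:ℝ) ^ 2) = Real.sqrt (((n:ℝ) ^ 2) ^ 2) from (Real.sqrt_sq (by positivity)).symm]
      apply Real.sqrt_lt_sqrt (by positivity)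
      calc ((n:ℝ) ^ 2) ^ 2 = (n:ℝ) ^ 4 := by ring
        _ < _ := hD4
    have hstrict : θm ^ (2 * ι * n) / Real.sqrt (4 * (n:ℝ) * ((2 * ι + 1 : ℕ) : ℝ) ^ 2 * 2 ^ (n - 2))
        < θm ^ (2 * ι * n) / (n:ℝ) ^ 2 :=
      div_lt_div_of_pos_left (pow_pos hθm0 _) hn2pos hsq
    have hle2 : θm ^ (2 * ι * n) / (n:ℝ) ^ 2 ≤ P.det ^ 2 / (n:ℝ) ^ 2 :=
      (div_le_div_iff_of_pos_right hn2pos).mpr hdet2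
    calc θm ^ (2 * ι * n) / Real.sqrt (4 * (n:ℝ) * ((2 * ι + 1 : ℕ) : ℝ) ^ 2 * 2 ^ (n - 2))
        < θm ^ (2 * ι * n) / (n:ℝ) ^ 2 := hstrict
      _ ≤ P.det ^ 2 / (n:ℝ) ^ 2 := hle2
      _ ≤ lamMin (P * Pᵀ) := hmin


end
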